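/- Let κ be an uncountable regular cardinal with κ^{<κ} = κ, let S be a perfect level subset of Add(κ,1)², and let T be a strategic S-tree. Then player I has a winning strategy in the Banach–Mazur game G_κ(p[T]) of length κ with the projection p[T] as winning condition. -/

import Mathlib

universe u

noncomputable section

/-! ## Sequences of ordinals

`SeqLT o v` is the set `v^{<o}` of all sequences of ordinals `< v` of length `< o`
(for `o > 0`; values beyond the length are normalized to `0`).
`SeqFull o v` is the generalized Baire space `v^o` of all functions from ordinals `< o`
to ordinals `< v`. -/

/-- An element of `v^{<o}`: a sequence of ordinals `< v` of length `< o`. -/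
structure SeqLT (o v : Ordinal.{u}) : Type (u + 1) where
  len : Ordinal.{u}
  len_lt : len < o ⊔ 1
  val : Ordinal.{u} → Ordinal.{u}
  val_lt : ∀ β, β < len → val β < v
  val_zero : ∀ β, len ≤ β → val β = 0

namespace SeqLT

variable {o v : Ordinal.{u}}

/-- `s ⊆ t`, i.e. `t` end-extends `s`. -/
protected def le (s t : SeqLT o v) : Prop :=
  s.len ≤ t.len ∧ ∀ β, β < s.len → s.val β = t.val β

/-- `s ⊊ t`, i.e. `t` properly end-extends `s`. -/
protected def slt (s t : SeqLT o v) : Prop :=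
  s.le t ∧ s.len < t.len

/-- The empty sequence. -/
protected def empty (o v : Ordinal.{u}) : SeqLT o v where
  len := 0
  len_lt := lt_sup_iff.mpr (Or.inr zero_lt_one)
  val := fun _ => 0
  val_lt := fun β h => absurd h (not_lt_of_ge (show (0 : Ordinal.{u}) ≤ β from zero_le))
  val_zero := fun _ _ => rfl

/-- `s⌢⟨β⟩`: the sequence `s` extended by the single value `β`. -/
def snoc (s : SeqLT o v) (β : Ordinal.{u}) : SeqLT o v :=
  if h : s.len + 1 < o ⊔ 1 ∧ β < v then
    { len := s.len + 1
      len_lt := h.1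
      val := fun γ => if γ = s.len then β else s.val γ
      val_lt := fun γ hγ => by
        rcases eq_or_ne γ s.len with rfl | hne
        · simpa using h.2
        · simp only [if_neg hne]
          refine s.val_lt γ (lt_of_le_of_ne ?_ hne)
          rw [Ordinal.add_one_eq_succ] at hγ
          exact Order.lt_succ_iff.mp hγ
      val_zero := fun γ hγ => by
        have h1 : s.len < γ :=
          lt_of_lt_of_le (by rw [Ordinal.add_one_eq_succ]; exact Order.lt_succ s.len) hγ
        simp only [if_neg h1.ne']
        exact s.val_zero γ h1.le }
  else s

protected theorem le_refl (s : SeqLT o v) : s.le s :=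
  ⟨le_rfl, fun _ _ => rfl⟩

protected theorem le_trans {s t u : SeqLT o v} (h1 : s.le t) (h2 : t.le u) : s.le u :=
  ⟨h1.1.trans h2.1, fun β hβ => (h1.2 β hβ).trans (h2.2 β (lt_of_lt_of_le hβ h1.1))⟩

end SeqLT

/-- An element of the generalized Baire space `v^o`. -/
structure SeqFull (o v : Ordinal.{u}) : Type (u + 1) where
  val : Ordinal.{u} → Ordinal.{u}
  val_lt : ∀ β, β < o → val β < v
  val_zero : ∀ β, o ≤ β → val β = 0

/-- The restriction `x ↾ β` of `x : v^o` to an ordinal `β < o`. -/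
def SeqFull.res {o v : Ordinal.{u}} (x : SeqFull o v) (β : Ordinal.{u}) : SeqLT o v :=
  if h : β < o ⊔ 1 then
    { len := β
      len_lt := h
      val := fun γ => if γ < β then x.val γ else 0
      val_lt := fun γ hγ => by
        simp only [if_pos hγ]
        rcases lt_sup_iff.mp h with h' | h'
        · exact x.val_lt γ (hγ.trans h')
        · rw [Ordinal.lt_one_iff_zero] at h'
          exact absurd (h' ▸ hγ) (not_lt_of_ge (show (0 : Ordinal.{u}) ≤ γ from zero_le))
      val_zero := fun γ hγ => if_neg (not_lt.mpr hγ) }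
  else SeqLT.empty o v

/-- `s ⊆ x`: the sequence `s` is an initial segment of `x : v^o`. -/
def SeqLT.prefixOf {o v : Ordinal.{u}} (s : SeqLT o v) (x : SeqFull o v) : Prop :=
  ∀ β, β < s.len → s.val β = x.val β

/-! ## The bounded topology -/

/-- The basic open set `N_t`. -/
def basicOpen {o v : Ordinal.{u}} (t : SeqLT o v) : Set (SeqFull o v) :=
  {x | t.prefixOf x}

/-- The bounded (standard) topology on the generalized Baire space, generated by the
basic open sets `N_t`. -/
instance (o v : Ordinal.{u}) : TopologicalSpace (SeqFull o v) :=
  TopologicalSpace.generateFrom {U | ∃ t : SeqLT o v, U = basicOpen t}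

/-- `A` is a nowhere dense subset of `B` (in the subspace topology on `B`). -/
def NowhereDenseIn {o v : Ordinal.{u}} (A B : Set (SeqFull o v)) : Prop :=
  A ⊆ B ∧ interior (closure {x : ↥B | (x : SeqFull o v) ∈ A}) = ∅

/-- `A` is `o`-meager in `B`: `A ∩ B` is the union of (card of) `o` many nowhere dense
subsets of `B`. -/
def MeagerIn {o v : Ordinal.{u}} (A B : Set (SeqFull o v)) : Prop :=
  ∃ F : {β : Ordinal.{u} // β < o} → Set (SeqFull o v),
    (∀ i, NowhereDenseIn (F i) B) ∧ A ∩ B = ⋃ i, F i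

/-- `A` is comeager in `B`: `B \ A` is meager in `B`. -/
def ComeagerIn {o v : Ordinal.{u}} (A B : Set (SeqFull o v)) : Prop :=
  MeagerIn (B \ A) B

/-- `A` has the `o`-Baire property: for some open `U`, `A △ U` is meager. -/
def BaireSet {o v : Ordinal.{u}} (A : Set (SeqFull o v)) : Prop :=
  ∃ U : Set (SeqFull o v), IsOpen U ∧ MeagerIn (symmDiff A U) Set.univ

/-! ## Homomorphisms of `v^{<o}` -/

/-- A homomorphism: strictly extension-preserving map of `v^{<o}` to itself. -/
def IsHom {o v : Ordinal.{u}} (f : SeqLT o v → SeqLT o v) : Prop :=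
  ∀ s t : SeqLT o v, s.slt t → (f s).slt (f t)

/-- `f` is dense: for every `s` and every `t ⊇ f(s)` there is `β < v` with
`f(s⌢⟨β⟩) ⊇ t`. -/
def IsDenseMap {o v : Ordinal.{u}} (f : SeqLT o v → SeqLT o v) : Prop :=
  ∀ s t : SeqLT o v, (f s).le t → ∃ β, β < v ∧ t.le (f (s.snoc β))

/-- `u = ⋃_{α<γ} s α` for a chain `s`. -/
def IsUnionOfChain {o v : Ordinal.{u}} (u : SeqLT o v) (γ : Ordinal.{u})
    (s : Ordinal.{u} → SeqLT o v) : Prop :=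
  (∀ α, α < γ → (s α).le u) ∧ ∀ β, β < u.len → ∃ α, α < γ ∧ β < (s α).len

/-- `f` is continuous: for every limit `γ < o` and every strictly increasing sequence
`⟨s_α : α < γ⟩`, `f(⋃_{α<γ} s_α) = ⋃_{α<γ} f(s_α)`. -/
def IsContinuousMap {o v : Ordinal.{u}} (f : SeqLT o v → SeqLT o v) : Prop :=
  ∀ γ : Ordinal.{u}, Order.IsSuccLimit γ → γ < o →
    ∀ s : Ordinal.{u} → SeqLT o v, (∀ α β, α < β → β < γ → (s α).slt (s β)) →
      ∀ u : SeqLT o v, IsUnionOfChain u γ s → IsUnionOfChain (f u) γ fun α => f (s α)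

/-- `y = f*(x) = ⋃_{α<o} f(x↾α)` for a homomorphism `f`. -/
def FStarVal {o v : Ordinal.{u}} (f : SeqLT o v → SeqLT o v) (x y : SeqFull o v) : Prop :=
  (∀ α, α < o → (f (x.res α)).prefixOf y) ∧
    ∀ β, β < o → ∃ α, α < o ∧ β < (f (x.res α)).len

/-! ## Clubs and the almost Baire property -/

/-- `C` is a club (closed unbounded set) in the ordinal `o`. -/
def IsClubIn (C : Set Ordinal.{u}) (o : Ordinal.{u}) : Prop :=
  (∀ γ ∈ C, γ < o) ∧ (∀ β, β < o → ∃ γ ∈ C, β ≤ γ) ∧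
    ∀ β, β < o → 0 < β → (∀ γ, γ < β → ∃ ξ ∈ C, γ < ξ ∧ ξ < β) → β ∈ C

/-- The set of functions coding elements of the club filter as characteristic functions. -/
def ClSet (o v : Ordinal.{u}) : Set (SeqFull o v) :=
  {x | ∃ C : Set Ordinal.{u}, IsClubIn C o ∧ ∀ i ∈ C, x.val i ≠ 0}

/-- The set of functions coding elements of the nonstationary ideal. -/
def NsSet (o v : Ordinal.{u}) : Set (SeqFull o v) :=
  {x | ∃ C : Set Ordinal.{u}, IsClubIn C o ∧ ∀ i ∈ C, x.val i = 0}

/-- `A` is almost Baire: there is a dense homomorphism `f` with `ran f* ⊆ A`, or a dense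
continuous homomorphism `f` with `f ∅ = ∅` and `ran f* ⊆ Aᶜ`. -/
def AlmostBaire {o v : Ordinal.{u}} (A : Set (SeqFull o v)) : Prop :=
  ∃ f : SeqLT o v → SeqLT o v, IsHom f ∧ IsDenseMap f ∧
    ((∀ x y, FStarVal f x y → y ∈ A) ∨
      ((∀ x y, FStarVal f x y → y ∉ A) ∧ IsContinuousMap f ∧
        f (SeqLT.empty o v) = SeqLT.empty o v))

/-! ## Banach–Mazur games of length `o`

A run of the game is a strictly increasing sequence `⟨s_α : α < o⟩` in `v^{<o}`;
player I plays at even positions (`0` and limits count as even), player II at odd ones.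
In the game `G^t` the first move of player I must extend `t`; taking `t = ∅` gives the
plain Banach–Mazur game. -/

/-- `γ` is an even ordinal (`0` and limits are even). -/
def EvenOrd (γ : Ordinal.{u}) : Prop := ∃ δ : Ordinal.{u}, γ = 2 * δ

/-- `γ` is an odd ordinal. -/
def OddOrd (γ : Ordinal.{u}) : Prop := ∃ δ : Ordinal.{u}, γ = 2 * δ + 1

/-- The moves of a (partial) run, as a function on ordinals. -/
abbrev Play (o v : Ordinal.{u}) := Ordinal.{u} → SeqLT o v

/-- A strategy: given the length of the current position and the moves so far,
produce the next move. -/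
abbrev Strat (o v : Ordinal.{u}) := Ordinal.{u} → Play o v → SeqLT o v

/-- `p` is a legal partial run of length `γ` of the game `G^t`: strictly increasing moves,
the first move extends `t`, and the moves beyond `γ` are normalized to `∅`. -/
def IsPos {o v : Ordinal.{u}} (t : SeqLT o v) (p : Play o v) (γ : Ordinal.{u}) : Prop :=
  (∀ α β, α < β → β < γ → (p α).slt (p β)) ∧ (0 < γ → t.le (p 0)) ∧
    ∀ α, γ ≤ α → p α = SeqLT.empty o v

/-- The restriction of a run to its first `γ` moves. -/
def resPlay {o v : Ordinal.{u}} (p : Play o v) (γ : Ordinal.{u}) : Play o v :=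
  fun α => if α < γ then p α else SeqLT.empty o v

/-- `m` is a legal move at the position `p` of length `γ` in the game `G^t`. -/
def MoveOK {o v : Ordinal.{u}} (t : SeqLT o v) (p : Play o v) (γ : Ordinal.{u})
    (m : SeqLT o v) : Prop :=
  (∀ α, α < γ → (p α).slt m) ∧ (γ = 0 → t.le m)

/-- `σ` is a strategy for player I in `G^t`: it assigns a legal move to every legal
position of even length. -/
def LegalI {o v : Ordinal.{u}} (t : SeqLT o v) (σ : Strat o v) : Prop :=
  ∀ γ, γ < o → EvenOrd γ → ∀ p, IsPos t p γ → MoveOK t p γ (σ γ p)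

/-- `σ` is a strategy for player II in `G^t`: it assigns a legal move to every legal
position of odd length. -/
def LegalII {o v : Ordinal.{u}} (t : SeqLT o v) (σ : Strat o v) : Prop :=
  ∀ γ, γ < o → OddOrd γ → ∀ p, IsPos t p γ → MoveOK t p γ (σ γ p)

/-- The first `γ` moves of `p` follow the strategy `σ` of player I. -/
def FollowsI {o v : Ordinal.{u}} (σ : Strat o v) (p : Play o v) (γ : Ordinal.{u}) : Prop :=
  ∀ α, α < γ → EvenOrd α → p α = σ α (resPlay p α)

/-- The first `γ` moves of `p` follow the strategy `σ` of player II. -/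
def FollowsII {o v : Ordinal.{u}} (σ : Strat o v) (p : Play o v) (γ : Ordinal.{u}) : Prop :=
  ∀ α, α < γ → OddOrd α → p α = σ α (resPlay p α)

/-- `x = ⋃_{α<o} p α` is the outcome of the complete run `p`. -/
def IsOutcome {o v : Ordinal.{u}} (p : Play o v) (x : SeqFull o v) : Prop :=
  (∀ α, α < o → (p α).prefixOf x) ∧ ∀ β, β < o → ∃ α, α < o ∧ β < (p α).len

/-- Player I has a winning strategy in the Banach–Mazur game `G^t(A)` of length `o`. -/
def WinIStrat {o v : Ordinal.{u}} (t : SeqLT o v) (A : Set (SeqFull o v)) : Prop :=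
  ∃ σ : Strat o v, LegalI t σ ∧
    ∀ p : Play o v, IsPos t p o → FollowsI σ p o → ∃ x, IsOutcome p x ∧ x ∈ A

/-- Player II has a winning strategy in the Banach–Mazur game `G^t(A)` of length `o`. -/
def WinIIStrat {o v : Ordinal.{u}} (t : SeqLT o v) (A : Set (SeqFull o v)) : Prop :=
  ∃ σ : Strat o v, LegalII t σ ∧
    ∀ p : Play o v, IsPos t p o → FollowsII σ p o → ∃ x, IsOutcome p x ∧ x ∉ A

/-- `σ` is a tactic for player II: its moves depend only on the union of the previous moves. -/
def IsTacticII {o v : Ordinal.{u}} (t : SeqLT o v) (σ : Strat o v) : Prop :=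
  ∃ f : SeqLT o v → SeqLT o v, ∀ γ, γ < o → OddOrd γ → ∀ p, IsPos t p γ →
    ∀ u, IsUnionOfChain u γ p → σ γ p = f u

/-- Player II has a winning tactic in the Banach–Mazur game `G^t(A)` of length `o`. -/
def WinIITactic {o v : Ordinal.{u}} (t : SeqLT o v) (A : Set (SeqFull o v)) : Prop :=
  ∃ σ : Strat o v, LegalII t σ ∧ IsTacticII t σ ∧
    ∀ p : Play o v, IsPos t p o → FollowsII σ p o → ∃ x, IsOutcome p x ∧ x ∉ A

/-! ## Trees and perfect sets -/

/-- A subtree of `v^{<o}`: a downwards closed set of sequences. -/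
def IsSubtree {o v : Ordinal.{u}} (T : Set (SeqLT o v)) : Prop :=
  ∀ s ∈ T, ∀ r : SeqLT o v, r.le s → r ∈ T

/-- `T` is closed: every strictly increasing sequence in `T` of length `< o` has an
upper bound in `T`. -/
def TreeClosed {o v : Ordinal.{u}} (T : Set (SeqLT o v)) : Prop :=
  ∀ γ : Ordinal.{u}, γ < o → ∀ s : Ordinal.{u} → SeqLT o v,
    (∀ α β, α < β → β < γ → (s α).slt (s β)) → (∀ α, α < γ → s α ∈ T) →
      ∃ b ∈ T, ∀ α, α < γ → (s α).le b

/-- `t` is a direct successor of `s`. -/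
def IsDirectSucc {o v : Ordinal.{u}} (s t : SeqLT o v) : Prop :=
  s.slt t ∧ t.len = s.len + 1

/-- `T` is a perfect tree: a (nonempty) closed subtree whose splitting nodes are cofinal. -/
def IsPerfectTree {o v : Ordinal.{u}} (T : Set (SeqLT o v)) : Prop :=
  T.Nonempty ∧ IsSubtree T ∧ TreeClosed T ∧
    ∀ s ∈ T, ∃ t ∈ T, s.le t ∧
      ∃ t₁ ∈ T, ∃ t₂ ∈ T, IsDirectSucc t t₁ ∧ IsDirectSucc t t₂ ∧ t₁ ≠ t₂

/-- The body `[T]` of a tree `T`: the set of branches of length `o` through `T`. -/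
def treeBody {o v : Ordinal.{u}} (T : Set (SeqLT o v)) : Set (SeqFull o v) :=
  {x | ∀ α, α < o → x.res α ∈ T}

/-- A sequence of elements of `o^{<o}` of length `< o` (values beyond the length are
normalized to the empty sequence). -/
structure SeqSeq (o : Ordinal.{u}) : Type (u + 1) where
  len : Ordinal.{u}
  len_lt : len < o ⊔ 1
  val : Ordinal.{u} → SeqLT o o
  val_empty : ∀ β, len ≤ β → val β = SeqLT.empty o o

namespace SeqSeq

variable {o : Ordinal.{u}}

/-- The restriction `s ↾ α`. -/
def res (s : SeqSeq o) (α : Ordinal.{u}) : SeqSeq o :=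
  if h : α < o ⊔ 1 then
    { len := α
      len_lt := h
      val := fun β => if β < α then s.val β else SeqLT.empty o o
      val_empty := fun β hβ => if_neg (not_lt.mpr hβ) }
  else s

/-- The sequence of length `γ` with values given by `f`. -/
def ofFun (o : Ordinal.{u}) (γ : Ordinal.{u}) (f : Ordinal.{u} → SeqLT o o) : SeqSeq o :=
  if h : γ < o ⊔ 1 then
    { len := γ
      len_lt := h
      val := fun β => if β < γ then f β else SeqLT.empty o o
      val_empty := fun β hβ => if_neg (not_lt.mpr hβ) }
  else
    { len := 0
      len_lt := lt_sup_iff.mpr (Or.inr zero_lt_one)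
      val := fun _ => SeqLT.empty o o
      val_empty := fun _ _ => rfl }

/-- `s` is an initial segment of `t`. -/
protected def le (s t : SeqSeq o) : Prop :=
  s.len ≤ t.len ∧ ∀ β, β < s.len → s.val β = t.val β

/-- The sequence `s` extended by the single value `m`. -/
def snoc (s : SeqSeq o) (m : SeqLT o o) : SeqSeq o :=
  if h : s.len + 1 < o ⊔ 1 then
    { len := s.len + 1
      len_lt := h
      val := fun β => if β = s.len then m else s.val β
      val_empty := fun β hβ => by
        have h1 : s.len < β :=
          lt_of_lt_of_le (by rw [Ordinal.add_one_eq_succ]; exact Order.lt_succ s.len) hβ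
        simp only [if_neg h1.ne']
        exact s.val_empty β h1.le }
  else s

end SeqSeq

/-- A level subset of `Add(κ,1)²`: a set of pairs `(s,t)` with `dom s = dom t`. -/
def IsLevelSubset {o : Ordinal.{u}} (S : Set (SeqLT o o × SeqLT o o)) : Prop :=
  ∀ q ∈ S, q.1.len = q.2.len

/-- `S` is closed: every strictly increasing sequence in `S` of length `< o` has an
upper bound in `S`. -/
def LevelClosed {o : Ordinal.{u}} (S : Set (SeqLT o o × SeqLT o o)) : Prop :=
  ∀ γ : Ordinal.{u}, γ < o → ∀ c : Ordinal.{u} → SeqLT o o × SeqLT o o,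
    (∀ α β, α < β → β < γ → (c α).1.slt (c β).1 ∧ (c α).2.slt (c β).2) →
    (∀ α, α < γ → c α ∈ S) →
      ∃ q ∈ S, ∀ α, α < γ → (c α).1.le q.1 ∧ (c α).2.le q.2

/-- Two pairs are compatible if some pair of sequences extends both coordinatewise. -/
def PairCompat {o : Ordinal.{u}} (q₁ q₂ : SeqLT o o × SeqLT o o) : Prop :=
  ∃ w₁ w₂ : SeqLT o o, q₁.1.le w₁ ∧ q₂.1.le w₁ ∧ q₁.2.le w₂ ∧ q₂.2.le w₂

/-- `S` is a perfect level subset: closed, and every element has two incompatible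
extensions in `S`. -/
def LevelPerfect {o : Ordinal.{u}} (S : Set (SeqLT o o × SeqLT o o)) : Prop :=
  LevelClosed S ∧ ∀ q ∈ S, ∃ q₁ ∈ S, ∃ q₂ ∈ S,
    (q.1.le q₁.1 ∧ q.2.le q₁.2) ∧ (q.1.le q₂.1 ∧ q.2.le q₂.2) ∧ ¬PairCompat q₁ q₂

/-- `⋃ ran (s↾γ) = ⋃ ran (u↾δ)` for chains `s`, `u`: the unions of the two chains agree
as partial functions. -/
def chainUnionEq {o : Ordinal.{u}} (γ : Ordinal.{u}) (s : Ordinal.{u} → SeqLT o o)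
    (δ : Ordinal.{u}) (u : Ordinal.{u} → SeqLT o o) : Prop :=
  (∀ β, (∃ α, α < γ ∧ β < (s α).len) ↔ ∃ α, α < δ ∧ β < (u α).len) ∧
    ∀ α β, α < γ → β < δ → ∀ ξ, ξ < (s α).len → ξ < (u β).len →
      (s α).val ξ = (u β).val ξ

/-- `T` is an `S`-tree. -/
def IsSTree {o : Ordinal.{u}} (S : Set (SeqLT o o × SeqLT o o))
    (T : Set (SeqSeq o × SeqSeq o)) : Prop :=
  (∀ p ∈ T,
    p.1.len = p.2.len ∧
    (∀ α β, α < β → β < p.1.len →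
      (p.1.val α).slt (p.1.val β) ∧ (p.2.val α).slt (p.2.val β)) ∧
    (∀ α, α < p.1.len → (p.1.val α, p.2.val α) ∈ S) ∧
    ∀ α, α < p.1.len → (p.1.res α, p.2.res α) ∈ T) ∧
  ∀ p ∈ T, ∀ q ∈ T, ∀ γ δ : Ordinal.{u}, EvenOrd γ → EvenOrd δ →
    γ < p.1.len → δ < q.1.len →
    chainUnionEq γ p.1.val δ q.1.val → chainUnionEq γ p.2.val δ q.2.val →
    p.1.val γ = q.1.val δ ∧ p.2.val γ = q.2.val δ

/-- The coordinatewise extension order on pairs of sequences. -/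
def pairLe {o : Ordinal.{u}} (p q : SeqSeq o × SeqSeq o) : Prop :=
  p.1.le q.1 ∧ p.2.le q.2

/-- `T` is superclosed: every strictly increasing sequence in `T` of length `< o` has an
upper bound in `T`, and `T` has no maximal elements. -/
def Superclosed {o : Ordinal.{u}} (T : Set (SeqSeq o × SeqSeq o)) : Prop :=
  (∀ γ : Ordinal.{u}, γ < o → ∀ c : Ordinal.{u} → SeqSeq o × SeqSeq o,
    (∀ α β, α < β → β < γ → pairLe (c α) (c β) ∧ c α ≠ c β) →
    (∀ α, α < γ → c α ∈ T) → ∃ q ∈ T, ∀ α, α < γ → pairLe (c α) q) ∧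
  ∀ p ∈ T, ∃ q ∈ T, pairLe p q ∧ p ≠ q

/-- `T` is a strategic `S`-tree. -/
def StrategicTree {o : Ordinal.{u}} (T : Set (SeqSeq o × SeqSeq o)) : Prop :=
  Superclosed T ∧
    ∀ p ∈ T, ∀ γ : Ordinal.{u}, EvenOrd γ → p.1.len = γ + 1 →
      ∀ u : SeqLT o o, (p.1.val γ).slt u →
        ∃ w₁ w₂ : SeqLT o o, u.le w₁ ∧ (p.1.snoc w₁, p.2.snoc w₂) ∈ T

/-- The projection `p[T]` of a superclosed `S`-tree `T`. -/
def projTree {o : Ordinal.{u}} (T : Set (SeqSeq o × SeqSeq o)) : Set (SeqFull o o) :=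
  {x | ∃ s t : Ordinal.{u} → SeqLT o o,
    (∀ γ, γ < o → (SeqSeq.ofFun o γ s, SeqSeq.ofFun o γ t) ∈ T) ∧
    (∀ α, α < o → (s α).prefixOf x) ∧ ∀ β, β < o → ∃ α, α < o ∧ β < (s α).len}


/-! ## Auxiliary material for the proof of `statement12` -/

theorem SeqLT.ext' {o v : Ordinal.{u}} {s t : SeqLT o v} (h1 : s.len = t.len)
    (h2 : s.val = t.val) : s = t := by
  cases s; cases t; dsimp at h1 h2; subst h1; subst h2; rfl

theorem SeqSeq.ext' {o : Ordinal.{u}} {s t : SeqSeq o} (h1 : s.len = t.len)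
    (h2 : s.val = t.val) : s = t := by
  cases s; cases t; dsimp at h1 h2; subst h1; subst h2; rfl

namespace BM

open Ordinal

/-! ### Ordinal parity -/

theorem two_mul_lt_of_limit : ∀ β : Ordinal.{u}, ∀ {lam : Ordinal.{u}}, Order.IsSuccLimit lam → β < lam →
    2 * β < lam := by
  intro β
  induction β using Ordinal.induction with
  | _ β IH =>
    intro lam hlam hβ
    rcases Ordinal.zero_or_succ_or_isSuccLimit β with rfl | ⟨a, rfl⟩ | hb
    · simpa using hlam.pos
    · have ha : a < lam := (Order.lt_succ a).trans hβ
      have h2a : 2 * a < lam := IH a (Order.lt_succ a) hlam ha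
      rw [Ordinal.mul_succ]
      calc 2 * a + 2 = (2 * a + 1) + 1 := by rw [add_assoc, one_add_one_eq_two]
        _ < lam := by
            rw [Ordinal.add_one_eq_succ, Ordinal.add_one_eq_succ]
            exact hlam.succ_lt (hlam.succ_lt h2a)
    · have h1 : 2 * β ≤ β := (Ordinal.mul_le_iff_of_isSuccLimit hb).2 fun δ hδ => (IH δ hδ hb hδ).le
      exact h1.trans_lt hβ

theorem evenOrd_zero : EvenOrd (0 : Ordinal.{u}) := ⟨0, (mul_zero 2).symm⟩

theorem evenOrd_of_limit {lam : Ordinal.{u}} (h : Order.IsSuccLimit lam) : EvenOrd lam := by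
  refine ⟨lam, ?_⟩
  have h1 : 2 * lam ≤ lam := (Ordinal.mul_le_iff_of_isSuccLimit h).2 fun δ hδ => (two_mul_lt_of_limit δ h hδ).le
  have h2 : lam ≤ 2 * lam := Ordinal.le_mul_right lam (by norm_num)
  exact (le_antisymm h1 h2).symm

theorem oddOrd_succ_of_evenOrd {β : Ordinal.{u}} (h : EvenOrd β) : OddOrd (β + 1) := by
  obtain ⟨δ, rfl⟩ := h; exact ⟨δ, rfl⟩

theorem evenOrd_succ_of_oddOrd {β : Ordinal.{u}} (h : OddOrd β) : EvenOrd (β + 1) := by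
  obtain ⟨δ, rfl⟩ := h
  exact ⟨δ + 1, by rw [Ordinal.add_one_eq_succ δ, Ordinal.mul_succ, add_assoc, one_add_one_eq_two]⟩

theorem evenOrd_not_oddOrd {β : Ordinal.{u}} (he : EvenOrd β) (ho : OddOrd β) : False := by
  obtain ⟨δ, rfl⟩ := he
  obtain ⟨ε, h⟩ := ho
  rcases le_or_gt δ ε with hle | hlt
  · have h1 : 2 * δ ≤ 2 * ε := mul_le_mul_right hle 2
    rw [h] at h1
    have h2 : 2 * ε < 2 * ε + 1 := by
      rw [Ordinal.add_one_eq_succ]; exact Order.lt_succ _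
    exact absurd h1 h2.not_ge
  · have h1 : 2 * Order.succ ε ≤ 2 * δ := mul_le_mul_right (Order.succ_le_of_lt hlt) 2
    rw [Ordinal.mul_succ, h] at h1
    have h2 : (2:Ordinal) ≤ 1 := (add_le_add_iff_left (2*ε)).1 h1
    exact absurd h2 (by norm_num)

theorem evenOrd_or_oddOrd (β : Ordinal.{u}) : EvenOrd β ∨ OddOrd β := by
  have hd := Ordinal.div_add_mod β 2
  have hm : β % 2 < 2 := Ordinal.mod_lt β (by norm_num)
  have hm1 : β % 2 ≤ 1 := by
    have : β % 2 < Order.succ 1 := by rw [← Ordinal.add_one_eq_succ, one_add_one_eq_two]; exact hm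
    exact Order.lt_succ_iff.1 this
  rcases Ordinal.le_one_iff.1 hm1 with h0 | h1
  · refine Or.inl ⟨β / 2, ?_⟩
    rw [h0, add_zero] at hd; exact hd.symm
  · refine Or.inr ⟨β / 2, ?_⟩
    rw [h1] at hd; exact hd.symm

/-! ### Basic order lemmas for sequences -/

variable {o : Ordinal.{u}}

theorem empty_le {v : Ordinal.{u}} (s : SeqLT o v) : (SeqLT.empty o v).le s :=
  ⟨zero_le, fun β hβ => absurd hβ ((show (0 : Ordinal.{u}) ≤ β from zero_le).not_gt)⟩

theorem le_slt_trans {v : Ordinal.{u}} {s t u : SeqLT o v} (h1 : s.le t) (h2 : t.slt u) :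
    s.slt u := ⟨SeqLT.le_trans h1 h2.1, lt_of_le_of_lt h1.1 h2.2⟩

theorem le_succ_self (x : Ordinal.{u}) : x ≤ x + 1 := by
  rw [Ordinal.add_one_eq_succ]; exact (Order.lt_succ x).le

theorem lt_succ_self (x : Ordinal.{u}) : x < x + 1 := by
  rw [Ordinal.add_one_eq_succ]; exact Order.lt_succ x

theorem sle_refl (s : SeqSeq o) : s.le s := ⟨le_rfl, fun _ _ => rfl⟩

theorem sle_trans {s t u : SeqSeq o} (h1 : s.le t) (h2 : t.le u) : s.le u :=
  ⟨h1.1.trans h2.1, fun β hβ => (h1.2 β hβ).trans (h2.2 β (lt_of_lt_of_le hβ h1.1))⟩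

theorem pairLe_refl (q : SeqSeq o × SeqSeq o) : pairLe q q := ⟨sle_refl _, sle_refl _⟩

theorem pairLe_trans {a b c : SeqSeq o × SeqSeq o} (h1 : pairLe a b) (h2 : pairLe b c) :
    pairLe a c := ⟨sle_trans h1.1 h2.1, sle_trans h1.2 h2.2⟩

/-! ### Tree lemmas -/

variable {S : Set (SeqLT o o × SeqLT o o)} {T : Set (SeqSeq o × SeqSeq o)}

theorem treeRes (hT : IsSTree S T) {q : SeqSeq o × SeqSeq o} (hq : q ∈ T) {μ : Ordinal.{u}}
    (hμ : μ ≤ q.1.len) :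
    ∃ r ∈ T, r.1.len = μ ∧ ∀ β, β < μ → r.1.val β = q.1.val β ∧ r.2.val β = q.2.val β := by
  rcases eq_or_lt_of_le hμ with rfl | hlt
  · exact ⟨q, hq, rfl, fun β _ => ⟨rfl, rfl⟩⟩
  · have h1 : μ < o ⊔ 1 := hlt.trans q.1.len_lt
    refine ⟨(q.1.res μ, q.2.res μ), (hT.1 q hq).2.2.2 μ hlt, ?_, ?_⟩
    · simp only [SeqSeq.res, dif_pos h1]
    · intro β hβ
      constructor <;> simp only [SeqSeq.res, dif_pos h1] <;> rw [if_pos hβ]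

theorem treeGrow (hT : IsSTree S T) (hsc : Superclosed T) {q : SeqSeq o × SeqSeq o}
    (hq : q ∈ T) : ∃ r ∈ T, q.1.len < r.1.len ∧ pairLe q r := by
  obtain ⟨r, hr, hle, hne⟩ := hsc.2 q hq
  refine ⟨r, hr, ?_, hle⟩
  rcases lt_or_eq_of_le hle.1.1 with h | h
  · exact h
  · exfalso; apply hne
    have e1 : q.1 = r.1 := by
      refine SeqSeq.ext' h (funext fun β => ?_)
      rcases lt_or_ge β q.1.len with hβ | hβ
      · exact hle.1.2 β hβ
      · rw [q.1.val_empty β hβ, r.1.val_empty β (h ▸ hβ)]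
    have hlen2 : q.2.len = r.2.len := by
      rw [← (hT.1 q hq).1, ← (hT.1 r hr).1]; exact h
    have e2 : q.2 = r.2 := by
      refine SeqSeq.ext' hlen2 (funext fun β => ?_)
      rcases lt_or_ge β q.2.len with hβ | hβ
      · exact hle.2.2 β hβ
      · rw [q.2.val_empty β hβ, r.2.val_empty β (hlen2 ▸ hβ)]
    exact Prod.ext e1 e2

theorem treeD (hT : IsSTree S T) (hsc : Superclosed T) {q : SeqSeq o × SeqSeq o} (hq : q ∈ T)
    {μ : Ordinal.{u}} (hμ : μ ≤ q.1.len + 1) :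
    ∃ r ∈ T, r.1.len = μ ∧
      ∀ a : SeqSeq o × SeqSeq o, pairLe a q → a.1.len ≤ μ → a.2.len ≤ μ → pairLe a r := by
  have main : ∀ q', q' ∈ T → μ ≤ q'.1.len → pairLe q q' →
      ∃ r ∈ T, r.1.len = μ ∧
        ∀ a, pairLe a q → a.1.len ≤ μ → a.2.len ≤ μ → pairLe a r := by
    intro q' hq' hμ' hqq'
    obtain ⟨r, hr, hlen, hval⟩ := treeRes hT hq' hμ'
    refine ⟨r, hr, hlen, fun a ha h1 h2 => ?_⟩
    have ha' : pairLe a q' := pairLe_trans ha hqq'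
    constructor
    · exact ⟨h1.trans_eq hlen.symm,
        fun β hβ => (ha'.1.2 β hβ).trans ((hval β (lt_of_lt_of_le hβ h1)).1).symm⟩
    · have hlen2 : r.2.len = μ := by rw [← (hT.1 r hr).1]; exact hlen
      exact ⟨h2.trans_eq hlen2.symm,
        fun β hβ => (ha'.2.2 β hβ).trans ((hval β (lt_of_lt_of_le hβ h2)).2).symm⟩
  rcases le_or_gt μ q.1.len with h | h
  · exact main q hq h (pairLe_refl q)
  · obtain ⟨q', hq', hlt, hle⟩ := treeGrow hT hsc hq
    have hμ' : μ ≤ q'.1.len := by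
      calc μ ≤ q.1.len + 1 := hμ
        _ ≤ q'.1.len := by rw [Ordinal.add_one_eq_succ]; exact Order.succ_le_of_lt hlt
    exact main q' hq' hμ' hle

/-! ### Picking nodes and the recursive node assignment -/

open Classical in
def pickNode (P : SeqSeq o × SeqSeq o → Prop) : SeqSeq o × SeqSeq o :=
  if h : ∃ q, P q then h.choose else
    (⟨0, lt_sup_iff.mpr (Or.inr zero_lt_one), fun _ => SeqLT.empty o o, fun _ _ => rfl⟩,
     ⟨0, lt_sup_iff.mpr (Or.inr zero_lt_one), fun _ => SeqLT.empty o o, fun _ _ => rfl⟩)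

theorem pickNode_spec {P : SeqSeq o × SeqSeq o → Prop} (h : ∃ q, P q) :
    P (pickNode P) := by
  rw [pickNode, dif_pos h]
  exact h.choose_spec

def rootNode (T : Set (SeqSeq o × SeqSeq o)) : SeqSeq o × SeqSeq o :=
  pickNode fun q => q ∈ T ∧ q.1.len = 1

def succNodeII (T : Set (SeqSeq o × SeqSeq o)) (β : Ordinal.{u}) (prev : SeqSeq o × SeqSeq o)
    (m : SeqLT o o) : SeqSeq o × SeqSeq o :=
  pickNode fun q => q ∈ T ∧ q.1.len = β + 1 + 1 ∧ pairLe prev q ∧ m.le (q.1.val (β + 1))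

def succNodeI (T : Set (SeqSeq o × SeqSeq o)) (β : Ordinal.{u}) (prev : SeqSeq o × SeqSeq o) :
    SeqSeq o × SeqSeq o :=
  pickNode fun q => q ∈ T ∧ q.1.len = β + 1 + 1 ∧ pairLe prev q

def limNode (T : Set (SeqSeq o × SeqSeq o)) (lam : Ordinal.{u})
    (f : Ordinal.{u} → SeqSeq o × SeqSeq o) : SeqSeq o × SeqSeq o :=
  pickNode fun q => q ∈ T ∧ q.1.len = lam + 1 ∧ ∀ α, α < lam → pairLe (f α) q

open Classical in
def Mnode (T : Set (SeqSeq o × SeqSeq o)) (p : Play o o) (γ : Ordinal.{u}) :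
    SeqSeq o × SeqSeq o :=
  Ordinal.limitRecOn γ (rootNode T)
    (fun β IH => if EvenOrd β then succNodeII T β IH (p (β + 1)) else succNodeI T β IH)
    (fun lam _ IH => limNode T lam fun α => if h : α < lam then IH α h else rootNode T)

theorem Mnode_zero (T : Set (SeqSeq o × SeqSeq o)) (p : Play o o) :
    Mnode T p 0 = rootNode T :=
  Ordinal.limitRecOn_zero _ _ _

open Classical in
theorem Mnode_succ (T : Set (SeqSeq o × SeqSeq o)) (p : Play o o) (β : Ordinal.{u}) :
    Mnode T p (Order.succ β) =
      if EvenOrd β then succNodeII T β (Mnode T p β) (p (β + 1)) else succNodeI T β (Mnode T p β) := by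
  simp only [Mnode, Ordinal.limitRecOn_succ]

open Classical in
theorem Mnode_limit (T : Set (SeqSeq o × SeqSeq o)) (p : Play o o) {lam : Ordinal.{u}}
    (h : Order.IsSuccLimit lam) :
    Mnode T p lam = limNode T lam fun α => if h' : α < lam then Mnode T p α else rootNode T := by
  simp only [Mnode]
  rw [Ordinal.limitRecOn_limit _ _ _ _ h]

theorem Mnode_congr (T : Set (SeqSeq o × SeqSeq o)) : ∀ γ : Ordinal.{u}, ∀ p q : Play o o,
    (∀ α, α < γ → p α = q α) → (OddOrd γ → p γ = q γ) → Mnode T p γ = Mnode T q γ := by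
  intro γ
  induction γ using Ordinal.induction with
  | _ γ IH =>
    intro p q h1 h2
    rcases Ordinal.zero_or_succ_or_isSuccLimit γ with rfl | ⟨a, rfl⟩ | hl
    · rw [Mnode_zero, Mnode_zero]
    · have ha : a < Order.succ a := Order.lt_succ a
      have hM : Mnode T p a = Mnode T q a :=
        IH a ha p q (fun α hα => h1 α (hα.trans ha)) (fun _ => h1 a ha)
      rw [Mnode_succ, Mnode_succ, hM]
      by_cases he : EvenOrd a
      · have h4 : OddOrd (Order.succ a) := by
          rw [← Ordinal.add_one_eq_succ]; exact oddOrd_succ_of_evenOrd he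
        have h3 : p (a + 1) = q (a + 1) := by
          rw [Ordinal.add_one_eq_succ]; exact h2 h4
        rw [if_pos he, if_pos he, h3]
      · rw [if_neg he, if_neg he]
    · rw [Mnode_limit T p hl, Mnode_limit T q hl]
      congr 1
      funext α
      by_cases hα : α < γ
      · rw [dif_pos hα, dif_pos hα]
        exact IH α hα p q (fun β hβ => h1 β (hβ.trans hα)) (fun _ => h1 α hα)
      · rw [dif_neg hα, dif_neg hα]

/-! ### `snoc` lemmas -/

theorem snoc_len {s : SeqSeq o} {m : SeqLT o o} (h : s.len + 1 < o ⊔ 1) :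
    (s.snoc m).len = s.len + 1 := by
  simp only [SeqSeq.snoc, dif_pos h]

theorem snoc_val_lt {s : SeqSeq o} {m : SeqLT o o} (h : s.len + 1 < o ⊔ 1) {β : Ordinal.{u}}
    (hβ : β ≠ s.len) : (s.snoc m).val β = s.val β := by
  simp only [SeqSeq.snoc, dif_pos h]
  rw [if_neg hβ]

theorem snoc_val_top {s : SeqSeq o} {m : SeqLT o o} (h : s.len + 1 < o ⊔ 1) :
    (s.snoc m).val s.len = m := by
  simp only [SeqSeq.snoc, dif_pos h]
  simp

theorem le_snoc {s : SeqSeq o} {m : SeqLT o o} (h : s.len + 1 < o ⊔ 1) : s.le (s.snoc m) := by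
  refine ⟨?_, fun β hβ => (snoc_val_lt h hβ.ne).symm⟩
  rw [snoc_len h]; exact le_succ_self _

/-! ### Positions, moves and the union of a chain -/

theorem resPlay_lt {v : Ordinal.{u}} {p : Play o v} {γ α : Ordinal.{u}} (h : α < γ) :
    resPlay p γ α = p α := if_pos h

theorem resPlay_resPlay {v : Ordinal.{u}} (p : Play o v) (γ : Ordinal.{u}) :
    resPlay (resPlay p γ) γ = resPlay p γ := by
  funext α; by_cases h : α < γ <;> simp [resPlay, h]

theorem moveOK_resPlay {t m : SeqLT o o} {γ : Ordinal.{u}} {p : Play o o} :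
    MoveOK t (resPlay p γ) γ m ↔ MoveOK t p γ m := by
  constructor <;> rintro ⟨ha, hb⟩ <;> refine ⟨fun α hα => ?_, hb⟩
  · have h := ha α hα; rwa [resPlay_lt hα] at h
  · rw [resPlay_lt hα]; exact ha α hα

theorem isPos_resPlay {t : SeqLT o o} {p : Play o o} {γ : Ordinal.{u}} (h : IsPos t p γ) :
    IsPos t (resPlay p γ) γ := by
  refine ⟨fun α β hαβ hβ => ?_, fun h0 => ?_, fun α hα => if_neg (not_lt.2 hα)⟩
  · rw [resPlay_lt (hαβ.trans hβ), resPlay_lt hβ]; exact h.1 α β hαβ hβ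
  · rw [resPlay_lt h0]; exact h.2.1 h0

theorem buildUnion (hpos : (0:Ordinal.{u}) < o) {γ : Ordinal.{u}} (p : Play o o)
    (hch : ∀ α β, α < β → β < γ → (p α).slt (p β)) :
    ∃ F : Ordinal.{u} → Ordinal.{u},
      (∀ α, α < γ → ∀ β, β < (p α).len → F β = (p α).val β) ∧
      (∀ β, F β < o) ∧
      (∀ β, (∀ α, α < γ → (p α).len ≤ β) → F β = 0) := by
  classical
  refine ⟨fun β => if h : ∃ α, α < γ ∧ β < (p α).len then (p h.choose).val β else 0, ?_, ?_, ?_⟩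
  · intro α hα β hβ
    have hex : ∃ α', α' < γ ∧ β < (p α').len := ⟨α, hα, hβ⟩
    dsimp only
    rw [dif_pos hex]
    rcases lt_trichotomy hex.choose α with h | h | h
    · exact (hch _ _ h hα).1.2 β hex.choose_spec.2
    · rw [h]
    · exact ((hch _ _ h hex.choose_spec.1).1.2 β hβ).symm
  · intro β; dsimp only; split
    · next h => exact (p h.choose).val_lt β h.choose_spec.2
    · exact hpos
  · intro β hβ
    dsimp only
    rw [dif_neg]
    rintro ⟨α, hα, hβ'⟩
    exact absurd hβ' (not_lt.mpr (hβ α hα))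

theorem exists_moveOK (hlim : Order.IsSuccLimit o)
    (hbd : ∀ γ, γ < o → ∀ f : ∀ α < γ, Ordinal.{u}, (∀ i hi, f i hi < o) →
      Ordinal.bsup γ f < o)
    {γ : Ordinal.{u}} (hγ : γ < o) (p : Play o o)
    (hch : ∀ α β, α < β → β < γ → (p α).slt (p β)) :
    ∃ m : SeqLT o o, MoveOK (SeqLT.empty o o) p γ m := by
  have hsup : o ⊔ 1 = o := sup_eq_left.mpr (Order.one_le_iff_pos.mpr hlim.pos)
  obtain ⟨F, hF1, hF2, hF3⟩ := buildUnion hlim.pos p hch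
  have hlenlt : ∀ α, (p α).len < o := fun α => lt_of_lt_of_le (p α).len_lt (le_of_eq hsup)
  have hℓ : Ordinal.bsup γ (fun α _ => (p α).len) < o :=
    hbd γ hγ _ fun i _ => hlenlt i
  set ℓ : Ordinal.{u} := Ordinal.bsup γ (fun α _ => (p α).len) with hℓdef
  have hub : ∀ α, α < γ → (p α).len ≤ ℓ := fun α hα => Ordinal.le_bsup _ α hα
  have hℓ1 : ℓ + 1 < o := by rw [Ordinal.add_one_eq_succ]; exact hlim.succ_lt hℓ
  refine ⟨⟨ℓ + 1, by rw [hsup]; exact hℓ1, F, fun β _ => hF2 β, ?_⟩, ?_, fun _ => empty_le _⟩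
  · intro β hβ
    refine hF3 β fun α hα => ?_
    exact (hub α hα).trans ((le_succ_self ℓ).trans hβ)
  · intro α hα
    refine ⟨⟨(hub α hα).trans (le_succ_self ℓ), fun β hβ => (hF1 α hα β hβ).symm⟩, ?_⟩
    exact lt_of_le_of_lt (hub α hα) (lt_succ_self ℓ)

/-! ### The strategy -/

open Classical in
def fallbackMove (γ : Ordinal.{u}) (p : Play o o) : SeqLT o o :=
  if h : ∃ m, MoveOK (SeqLT.empty o o) p γ m then h.choose else SeqLT.empty o o

open Classical in
def theStrat (T : Set (SeqSeq o × SeqSeq o)) : Strat o o := fun γ p =>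
  if MoveOK (SeqLT.empty o o) (resPlay p γ) γ ((Mnode T (resPlay p γ) γ).1.val γ) then
    (Mnode T (resPlay p γ) γ).1.val γ
  else fallbackMove γ (resPlay p γ)

theorem theStrat_legal (hlim : Order.IsSuccLimit o)
    (hbd : ∀ γ, γ < o → ∀ f : ∀ α < γ, Ordinal.{u}, (∀ i hi, f i hi < o) →
      Ordinal.bsup γ f < o)
    (T : Set (SeqSeq o × SeqSeq o)) : LegalI (SeqLT.empty o o) (theStrat T) := by
  intro γ hγ _ p hp
  dsimp only [theStrat]
  split
  · next h => exact moveOK_resPlay.mp h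
  · next h =>
    have he : ∃ m, MoveOK (SeqLT.empty o o) (resPlay p γ) γ m :=
      exists_moveOK hlim hbd hγ _ (isPos_resPlay hp).1
    rw [fallbackMove, dif_pos he]
    exact moveOK_resPlay.mp he.choose_spec

/-! ### The invariant along a run following the strategy -/

theorem invariant (hlim : Order.IsSuccLimit o)
    (hT : IsSTree S T) (hstrat : StrategicTree T)
    (p : Play o o) (hp : IsPos (SeqLT.empty o o) p o) (hf : FollowsI (theStrat T) p o) :
    ∀ γ, γ < o →
      Mnode T p γ ∈ T ∧ (Mnode T p γ).1.len = γ + 1 ∧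
      (∀ δ, δ < γ → pairLe (Mnode T p δ) (Mnode T p γ)) ∧
      (p γ).le ((Mnode T p γ).1.val γ) ∧
      (EvenOrd γ → p γ = (Mnode T p γ).1.val γ) := by
  have hsup : o ⊔ 1 = o := sup_eq_left.mpr (Order.one_le_iff_pos.mpr hlim.pos)
  have key : ∀ γ, γ < o → EvenOrd γ → Mnode T p γ ∈ T → (Mnode T p γ).1.len = γ + 1 →
      (∀ α, α < γ → (p α).le ((Mnode T p γ).1.val α)) → p γ = (Mnode T p γ).1.val γ := by
    intro γ hγ he hmem hlen hbelow
    have hMeq : Mnode T (resPlay p γ) γ = Mnode T p γ :=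
      Mnode_congr T γ _ _ (fun α hα => resPlay_lt hα)
        (fun hodd => (evenOrd_not_oddOrd he hodd).elim)
    have hmo : MoveOK (SeqLT.empty o o) (resPlay p γ) γ ((Mnode T p γ).1.val γ) := by
      refine moveOK_resPlay.mpr ⟨fun α hα => ?_, fun _ => empty_le _⟩
      have hchain := (hT.1 _ hmem).2.1
      have hslt : ((Mnode T p γ).1.val α).slt ((Mnode T p γ).1.val γ) :=
        (hchain α γ hα (by rw [hlen]; exact lt_succ_self γ)).1
      exact le_slt_trans (hbelow α hα) hslt
    have hfγ := hf γ hγ he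
    rw [hfγ]
    dsimp only [theStrat]
    rw [resPlay_resPlay, hMeq, if_pos hmo]
  intro γ
  induction γ using Ordinal.induction with
  | _ γ IH =>
    intro hγ
    rcases Ordinal.zero_or_succ_or_isSuccLimit γ with rfl | ⟨a, rfl⟩ | hl
    · -- zero case
      have hex : ∃ q, q ∈ T ∧ q.1.len = 1 := by
        obtain ⟨q, hq, -⟩ := hstrat.1.1 0 hlim.pos (fun _ => rootNode T)
          (fun α β _ hβ => absurd hβ ((show (0 : Ordinal.{u}) ≤ β from zero_le).not_gt))
          (fun α hα => absurd hα ((show (0 : Ordinal.{u}) ≤ α from zero_le).not_gt))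
        obtain ⟨r, hr, hlenr, -⟩ := treeD hT hstrat.1 hq (μ := 1)
          (by calc (1:Ordinal.{u}) = 0 + 1 := (zero_add 1).symm
              _ ≤ q.1.len + 1 := add_le_add_left zero_le 1)
        exact ⟨r, hr, hlenr⟩
      have hspec : Mnode T p 0 ∈ T ∧ (Mnode T p 0).1.len = 1 := by
        rw [Mnode_zero]; exact pickNode_spec hex
      have hlen0 : (Mnode T p 0).1.len = 0 + 1 := by rw [zero_add]; exact hspec.2
      have h5 : p 0 = (Mnode T p 0).1.val 0 :=
        key 0 hγ evenOrd_zero hspec.1 hlen0 (fun α hα => absurd hα ((show (0 : Ordinal.{u}) ≤ α from zero_le).not_gt))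
      exact ⟨hspec.1, hlen0, fun δ hδ => absurd hδ ((show (0 : Ordinal.{u}) ≤ δ from zero_le).not_gt),
        by rw [h5]; exact SeqLT.le_refl _, fun _ => h5⟩
    · -- successor case
      have ha : a < Order.succ a := Order.lt_succ a
      have hao : a < o := ha.trans hγ
      obtain ⟨hmem_a, hlen_a, hmono_a, hle_a, heq_a⟩ := IH a ha hao
      have hlen2_a : (Mnode T p a).2.len = a + 1 := by
        rw [← (hT.1 _ hmem_a).1]; exact hlen_a
      have h2 : a + 1 + 1 < o ⊔ 1 := by
        rw [hsup, Ordinal.add_one_eq_succ a, Ordinal.add_one_eq_succ (Order.succ a)]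
        exact hlim.succ_lt hγ
      by_cases he : EvenOrd a
      · -- player II just moved
        have hslt : ((Mnode T p a).1.val a).slt (p (Order.succ a)) := by
          rw [← heq_a he]
          exact hp.1 a (Order.succ a) ha hγ
        obtain ⟨w₁, w₂, hw₁, hmemw⟩ :=
          hstrat.2 (Mnode T p a) hmem_a a he hlen_a (p (Order.succ a)) hslt
        have hc1 : (Mnode T p a).1.len + 1 < o ⊔ 1 := by rw [hlen_a]; exact h2
        have hc2 : (Mnode T p a).2.len + 1 < o ⊔ 1 := by rw [hlen2_a]; exact h2
        have hex : ∃ q, q ∈ T ∧ q.1.len = a + 1 + 1 ∧ pairLe (Mnode T p a) q ∧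
            (p (a + 1)).le (q.1.val (a + 1)) := by
          refine ⟨((Mnode T p a).1.snoc w₁, (Mnode T p a).2.snoc w₂), hmemw, ?_,
            ⟨le_snoc hc1, le_snoc hc2⟩, ?_⟩
          · rw [snoc_len hc1, hlen_a]
          · have htop : ((Mnode T p a).1.snoc w₁).val (a + 1) = w₁ := by
              have h := snoc_val_top (m := w₁) hc1
              rwa [hlen_a] at h
            rw [htop, Ordinal.add_one_eq_succ a]
            exact hw₁
        have hMs : Mnode T p (Order.succ a) = succNodeII T a (Mnode T p a) (p (a + 1)) := by
          rw [Mnode_succ, if_pos he]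
        have hs : Mnode T p (Order.succ a) ∈ T ∧
            (Mnode T p (Order.succ a)).1.len = a + 1 + 1 ∧
            pairLe (Mnode T p a) (Mnode T p (Order.succ a)) ∧
            (p (a + 1)).le ((Mnode T p (Order.succ a)).1.val (a + 1)) := by
          rw [hMs]; exact pickNode_spec hex
        obtain ⟨hmem, hlen', hple, hval'⟩ := hs
        have hlen : (Mnode T p (Order.succ a)).1.len = Order.succ a + 1 := by
          rw [hlen', Ordinal.add_one_eq_succ a]
        have hmono : ∀ δ, δ < Order.succ a →
            pairLe (Mnode T p δ) (Mnode T p (Order.succ a)) := by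
          intro δ hδ
          rcases (Order.lt_succ_iff.1 hδ).lt_or_eq with hlt | rfl
          · exact pairLe_trans (hmono_a δ hlt) hple
          · exact hple
        refine ⟨hmem, hlen, hmono, ?_, ?_⟩
        · rw [← Ordinal.add_one_eq_succ a]; exact hval'
        · intro hev
          exact absurd hev (fun hev => evenOrd_not_oddOrd hev
            (by rw [← Ordinal.add_one_eq_succ a]; exact oddOrd_succ_of_evenOrd he))
      · -- player I moves at the even successor
        have ho : OddOrd a := (evenOrd_or_oddOrd a).resolve_left he
        have hex : ∃ q, q ∈ T ∧ q.1.len = a + 1 + 1 ∧ pairLe (Mnode T p a) q := by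
          obtain ⟨r, hr, hlenr, hcl⟩ := treeD hT hstrat.1 hmem_a (μ := a + 1 + 1)
            (by rw [hlen_a])
          refine ⟨r, hr, hlenr, hcl _ (pairLe_refl _) ?_ ?_⟩
          · rw [hlen_a]; exact le_succ_self _
          · rw [hlen2_a]; exact le_succ_self _
        have hMs : Mnode T p (Order.succ a) = succNodeI T a (Mnode T p a) := by
          rw [Mnode_succ, if_neg he]
        have hs : Mnode T p (Order.succ a) ∈ T ∧
            (Mnode T p (Order.succ a)).1.len = a + 1 + 1 ∧
            pairLe (Mnode T p a) (Mnode T p (Order.succ a)) := by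
          rw [hMs]; exact pickNode_spec hex
        obtain ⟨hmem, hlen', hple⟩ := hs
        have hlen : (Mnode T p (Order.succ a)).1.len = Order.succ a + 1 := by
          rw [hlen', Ordinal.add_one_eq_succ a]
        have hmono : ∀ δ, δ < Order.succ a →
            pairLe (Mnode T p δ) (Mnode T p (Order.succ a)) := by
          intro δ hδ
          rcases (Order.lt_succ_iff.1 hδ).lt_or_eq with hlt | rfl
          · exact pairLe_trans (hmono_a δ hlt) hple
          · exact hple
        have hev : EvenOrd (Order.succ a) := by
          rw [← Ordinal.add_one_eq_succ a]; exact evenOrd_succ_of_oddOrd ho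
        have hbelow : ∀ α, α < Order.succ a →
            (p α).le ((Mnode T p (Order.succ a)).1.val α) := by
          intro α hα
          have h1 := (IH α hα (hα.trans hγ)).2.2.2.1
          have hlenα := (IH α hα (hα.trans hγ)).2.1
          have h2 : (Mnode T p α).1.val α = (Mnode T p (Order.succ a)).1.val α :=
            (hmono α hα).1.2 α (by rw [hlenα]; exact lt_succ_self α)
          rw [← h2]; exact h1
        have h5 := key (Order.succ a) hγ hev hmem hlen hbelow
        exact ⟨hmem, hlen, hmono, by rw [h5]; exact SeqLT.le_refl _, fun _ => h5⟩
    · -- limit case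
      have hchain : ∀ α β, α < β → β < γ →
          pairLe (Mnode T p α) (Mnode T p β) ∧ Mnode T p α ≠ Mnode T p β := by
        intro α β hαβ hβ
        obtain ⟨_, hlenβ, hmonoβ, _, _⟩ := IH β hβ (hβ.trans hγ)
        refine ⟨hmonoβ α hαβ, fun hEq => ?_⟩
        have hlenα := (IH α (hαβ.trans hβ) ((hαβ.trans hβ).trans hγ)).2.1
        rw [hEq, hlenβ] at hlenα
        have hba : β = α := by
          rwa [Ordinal.add_one_eq_succ, Ordinal.add_one_eq_succ,
            Order.succ_eq_succ_iff] at hlenα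
        exact absurd hba hαβ.ne'
      obtain ⟨q, hq, hub⟩ := hstrat.1.1 γ hγ (fun α => Mnode T p α) hchain
        (fun α hα => (IH α hα (hα.trans hγ)).1)
      have hlenq : γ ≤ q.1.len := by
        by_contra hc
        push_neg at hc
        have h1 := (hub q.1.len hc).1.1
        rw [(IH q.1.len hc (hc.trans hγ)).2.1] at h1
        exact absurd h1 (by rw [Ordinal.add_one_eq_succ]; exact (Order.lt_succ q.1.len).not_ge)
      have hex : ∃ r, r ∈ T ∧ r.1.len = γ + 1 ∧ ∀ α, α < γ →
          pairLe ((fun α => if h' : α < γ then Mnode T p α else rootNode T) α) r := by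
        obtain ⟨r, hr, hlenr, hcl⟩ := treeD hT hstrat.1 hq (μ := γ + 1)
          (add_le_add_left hlenq 1)
        refine ⟨r, hr, hlenr, fun α hα => ?_⟩
        dsimp only
        rw [dif_pos hα]
        refine hcl _ (hub α hα) ?_ ?_
        · rw [(IH α hα (hα.trans hγ)).2.1]; exact add_le_add_left hα.le 1
        · rw [← (hT.1 _ (IH α hα (hα.trans hγ)).1).1, (IH α hα (hα.trans hγ)).2.1]
          exact add_le_add_left hα.le 1
      have hs : Mnode T p γ ∈ T ∧ (Mnode T p γ).1.len = γ + 1 ∧ ∀ α, α < γ →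
          pairLe ((fun α => if h' : α < γ then Mnode T p α else rootNode T) α)
            (Mnode T p γ) := by
        rw [Mnode_limit T p hl]; exact pickNode_spec hex
      obtain ⟨hmem, hlen, hub'⟩ := hs
      have hmono : ∀ δ, δ < γ → pairLe (Mnode T p δ) (Mnode T p γ) := by
        intro δ hδ
        have h1 := hub' δ hδ
        dsimp only at h1
        rwa [dif_pos hδ] at h1
      have hev : EvenOrd γ := evenOrd_of_limit hl
      have hbelow : ∀ α, α < γ → (p α).le ((Mnode T p γ).1.val α) := by
        intro α hα
        have h1 := (IH α hα (hα.trans hγ)).2.2.2.1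
        have hlenα := (IH α hα (hα.trans hγ)).2.1
        have h2 : (Mnode T p α).1.val α = (Mnode T p γ).1.val α :=
          (hmono α hα).1.2 α (by rw [hlenα]; exact lt_succ_self α)
        rw [← h2]; exact h1
      have h5 := key γ hγ hev hmem hlen hbelow
      exact ⟨hmem, hlen, hmono, by rw [h5]; exact SeqLT.le_refl _, fun _ => h5⟩

end BM

/-- For an uncountable regular cardinal `κ` with `κ^{<κ} = κ`, a perfect level subset `S` of
`Add(κ,1)²` and a strategic `S`-tree `T`: player I has a winning strategy in the
Banach–Mazur game `G_κ(p[T])` of length `κ`. -/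
theorem statement12 (κ : Cardinal.{u}) (hreg : κ.IsRegular) (hunc : Cardinal.aleph0 < κ)
    (hpow : Cardinal.powerlt κ κ = κ)
    (S : Set (SeqLT κ.ord κ.ord × SeqLT κ.ord κ.ord))
    (hlevel : IsLevelSubset S) (hperf : LevelPerfect S)
    (T : Set (SeqSeq κ.ord × SeqSeq κ.ord))
    (hT : IsSTree S T) (hstrat : StrategicTree T) :
    WinIStrat (SeqLT.empty κ.ord κ.ord) (projTree T) := by
  classical
  have hlim : Order.IsSuccLimit κ.ord := Cardinal.isSuccLimit_ord hreg.aleph0_le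
  have hsup : κ.ord ⊔ 1 = κ.ord := sup_eq_left.mpr (Order.one_le_iff_pos.mpr hlim.pos)
  have hbd : ∀ γ, γ < κ.ord → ∀ f : ∀ α < γ, Ordinal.{u},
      (∀ i hi, f i hi < κ.ord) → Ordinal.bsup γ f < κ.ord :=
    fun γ hγ f hf => Cardinal.bsup_lt_ord_of_isRegular hreg (Cardinal.lt_ord.1 hγ) hf
  refine ⟨BM.theStrat T, BM.theStrat_legal hlim hbd T, ?_⟩
  intro p hp hf
  have Inv := BM.invariant hlim hT hstrat p hp hf
  have lenge : ∀ α, α < κ.ord → α ≤ (p α).len := by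
    intro α
    induction α using Ordinal.induction with
    | _ α IH2 =>
      intro hα
      by_contra hc
      push_neg at hc
      have hlenlt : (p α).len < κ.ord := lt_of_lt_of_le (p α).len_lt (le_of_eq hsup)
      have h1 := IH2 (p α).len hc hlenlt
      have h2 := (hp.1 (p α).len α hc hα).2
      exact absurd (h1.trans_lt h2) (lt_irrefl _)
  obtain ⟨F, hF1, hF2, hF3⟩ := BM.buildUnion hlim.pos p hp.1
  refine ⟨⟨F, fun β _ => hF2 β, ?_⟩, ⟨?_, ?_⟩, ?_⟩
  · -- val_zero of x
    intro β hβ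
    refine hF3 β fun α hα => ?_
    exact le_of_lt (lt_of_lt_of_le (lt_of_lt_of_le (p α).len_lt (le_of_eq hsup)) hβ)
  · -- prefixes of the outcome
    intro α hα β hβ
    exact (hF1 α hα β hβ).symm
  · -- unboundedness of the run
    intro β hβ
    have hβ1 : β + 1 < κ.ord := by
      rw [Ordinal.add_one_eq_succ]; exact hlim.succ_lt hβ
    exact ⟨β + 1, hβ1, lt_of_lt_of_le (BM.lt_succ_self β) (lenge (β + 1) hβ1)⟩
  · -- membership in the projection
    refine ⟨fun α => (BM.Mnode T p α).1.val α, fun α => (BM.Mnode T p α).2.val α, ?_, ?_, ?_⟩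
    · -- the approximations lie in T
      intro γ hγ
      obtain ⟨hmem, hlen, hmono, -, -⟩ := Inv γ hγ
      have hres := (hT.1 _ hmem).2.2.2 γ (by rw [hlen]; exact BM.lt_succ_self γ)
      have hγ1 : γ < κ.ord ⊔ 1 := lt_sup_iff.mpr (Or.inl hγ)
      have hvals : ∀ β, β < γ →
          (BM.Mnode T p β).1.val β = (BM.Mnode T p γ).1.val β ∧
          (BM.Mnode T p β).2.val β = (BM.Mnode T p γ).2.val β := by
        intro β hβ
        have hlenβ := (Inv β (hβ.trans hγ)).2.1
        have hlen2β : (BM.Mnode T p β).2.len = β + 1 := by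
          rw [← (hT.1 _ (Inv β (hβ.trans hγ)).1).1]; exact hlenβ
        constructor
        · exact (hmono β hβ).1.2 β (by rw [hlenβ]; exact BM.lt_succ_self β)
        · exact (hmono β hβ).2.2 β (by rw [hlen2β]; exact BM.lt_succ_self β)
      have e1 : SeqSeq.ofFun κ.ord γ (fun α => (BM.Mnode T p α).1.val α) =
          (BM.Mnode T p γ).1.res γ := by
        refine SeqSeq.ext' ?_ ?_
        · simp only [SeqSeq.ofFun, SeqSeq.res, dif_pos hγ1]
        · funext β
          simp only [SeqSeq.ofFun, SeqSeq.res, dif_pos hγ1]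
          by_cases hβ : β < γ
          · rw [if_pos hβ, if_pos hβ]
            exact (hvals β hβ).1
          · rw [if_neg hβ, if_neg hβ]
      have e2 : SeqSeq.ofFun κ.ord γ (fun α => (BM.Mnode T p α).2.val α) =
          (BM.Mnode T p γ).2.res γ := by
        refine SeqSeq.ext' ?_ ?_
        · simp only [SeqSeq.ofFun, SeqSeq.res, dif_pos hγ1]
        · funext β
          simp only [SeqSeq.ofFun, SeqSeq.res, dif_pos hγ1]
          by_cases hβ : β < γ
          · rw [if_pos hβ, if_pos hβ]
            exact (hvals β hβ).2
          · rw [if_neg hβ, if_neg hβ]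
      rw [e1, e2]
      exact hres
    · -- the approximations are initial segments of the outcome
      intro α hα
      dsimp only
      rcases BM.evenOrd_or_oddOrd α with he | ho
      · rw [← (Inv α hα).2.2.2.2 he]
        exact fun β hβ => (hF1 α hα β hβ).symm
      · have hα1 : α + 1 < κ.ord := by
          rw [Ordinal.add_one_eq_succ]; exact hlim.succ_lt hα
        have hev : EvenOrd (α + 1) := BM.evenOrd_succ_of_oddOrd ho
        obtain ⟨hm1, hl1, hmo1, -, he1⟩ := Inv (α + 1) hα1
        have hvv : ((BM.Mnode T p α).1.val α).slt ((BM.Mnode T p (α + 1)).1.val (α + 1)) := by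
          have hchain := (hT.1 _ hm1).2.1
          have h1 : (BM.Mnode T p α).1.val α = (BM.Mnode T p (α + 1)).1.val α :=
            (hmo1 α (BM.lt_succ_self α)).1.2 α
              (by rw [(Inv α hα).2.1]; exact BM.lt_succ_self α)
          rw [h1]
          exact (hchain α (α + 1) (BM.lt_succ_self α) (by rw [hl1]; exact BM.lt_succ_self _)).1
        have hpe : p (α + 1) = (BM.Mnode T p (α + 1)).1.val (α + 1) := he1 hev
        intro β hβ
        have h2 : ((BM.Mnode T p α).1.val α).val β = (p (α + 1)).val β := by
          rw [hpe]; exact hvv.1.2 β hβ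
        rw [h2]
        refine (hF1 (α + 1) hα1 β ?_).symm
        refine lt_of_lt_of_le hβ ?_
        rw [hpe]
        exact hvv.1.1
    · -- unboundedness of the approximations
      intro β hβ
      dsimp only
      have hβ1 : β + 1 < κ.ord := by
        rw [Ordinal.add_one_eq_succ]; exact hlim.succ_lt hβ
      have h1 : (p (β + 1)).len ≤ ((BM.Mnode T p (β + 1)).1.val (β + 1)).len :=
        (Inv (β + 1) hβ1).2.2.2.1.1
      exact ⟨β + 1, hβ1,
        lt_of_lt_of_le (lt_of_lt_of_le (BM.lt_succ_self β) (lenge (β + 1) hβ1)) h1⟩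


end
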